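/- For each integer t ≥ 3 and all sufficiently large n, there exists a two-colouring (red/blue) of the edges of the complete graph K_n that does not contain an unavoidable t-colouring and in which each colour appears on at least (ex(n, K_{t,t}) − 1)/2 edges; that is, the colouring is δ_t-far from being monochromatic with δ_t(n) = (ex(n, K_{t,t}) − 1)/(2n²). -/

import Mathlib

/-- A two-coloured complete graph (red graph `R`, blue graph `Rᶜ`) contains an
unavoidable `t`-colouring: there are disjoint `t`-sets `X`, `Y` such that one of
the colours `G ∈ {R, Rᶜ}` forms either the clique on `X` alone, or the two disjoint
cliques on `X` and on `Y`, with all remaining edges among `X ∪ Y` of the other colour. -/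
def ContainsUnavoidable {V : Type*} (R : SimpleGraph V) (t : ℕ) : Prop :=
  ∃ X Y : Finset V, Disjoint X Y ∧ X.card = t ∧ Y.card = t ∧
    ∃ G : SimpleGraph V, (G = R ∨ G = Rᶜ) ∧
      G.IsClique (X : Set V) ∧
      (G.IsClique (Y : Set V) ∨ Gᶜ.IsClique (Y : Set V)) ∧
      ∀ x ∈ X, ∀ y ∈ Y, Gᶜ.Adj x y

/-- `G` contains a copy of `H` (as a not necessarily induced subgraph). -/
def ContainsCopy {V W : Type*} (G : SimpleGraph V) (H : SimpleGraph W) : Prop :=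
  ∃ f : W → V, Function.Injective f ∧ ∀ a b, H.Adj a b → G.Adj (f a) (f b)

/-- The Turán number `ex(n, H)`: the maximum number of edges of an `H`-free
graph on `n` vertices. -/
noncomputable def turanNumber (n : ℕ) {W : Type*} (H : SimpleGraph W) : ℕ :=
  sSup {m | ∃ G : SimpleGraph (Fin n), ¬ ContainsCopy G H ∧ G.edgeSet.ncard = m}

open Finset

/-- degree sum over a set of non-diagonal edges -/
lemma helper1 {n : ℕ} (F : Finset (Sym2 (Fin n))) (hF : ∀ e ∈ F, ¬ e.IsDiag) :
    ∑ v : Fin n, (F.filter (fun e => v ∈ e)).card = 2 * F.card := by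
  classical
  simp only [Finset.card_filter]
  rw [Finset.sum_comm]
  rw [Finset.card_eq_sum_ones F, Finset.mul_sum]
  refine Finset.sum_congr rfl (fun e he => ?_)
  induction e with
  | _ a b =>
    have hab : a ≠ b := by simpa using hF _ he
    have : (Finset.univ.filter (fun v : Fin n => v ∈ (s(a,b) : Sym2 (Fin n)))) = {a, b} := by
      ext v; simp [Sym2.mem_iff]
    calc ∑ v : Fin n, (if v ∈ (s(a,b) : Sym2 (Fin n)) then 1 else 0)
        = (Finset.univ.filter (fun v : Fin n => v ∈ (s(a,b) : Sym2 (Fin n)))).card := by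
          rw [Finset.card_filter]
      _ = 2 := by rw [this]; rw [Finset.card_insert_of_notMem (by simpa using hab), Finset.card_singleton]
      _ = 2 * 1 := rfl

lemma maxcut {n : ℕ} (F : Finset (Sym2 (Fin n))) (hF : ∀ e ∈ F, ¬ e.IsDiag) :
    ∃ c : Fin n → Bool,
      F.card ≤ 2 * (F.filter (fun e => ¬ (e.map c).IsDiag)).card := by
  classical
  have hne : (Finset.univ : Finset (Fin n → Bool)).Nonempty := ⟨fun _ => true, Finset.mem_univ _⟩
  have hmax := Finset.exists_max_image (Finset.univ : Finset (Fin n → Bool))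
    (fun c => (F.filter (fun e => ¬ (e.map c).IsDiag)).card) hne
  obtain ⟨c, -, hc⟩ := hmax
  refine ⟨c, ?_⟩
  -- per-vertex: mono edges at v ≤ bichromatic edges at v
  have key : ∀ v : Fin n,
      (F.filter (fun e => v ∈ e ∧ (e.map c).IsDiag)).card ≤
      (F.filter (fun e => v ∈ e ∧ ¬ (e.map c).IsDiag)).card := by
    intro v
    set c' : Fin n → Bool := Function.update c v (! c v) with hc'
    have hflip : ∀ e ∈ F, (¬ (e.map c').IsDiag ↔
        ((v ∈ e ∧ (e.map c).IsDiag) ∨ (v ∉ e ∧ ¬ (e.map c).IsDiag))) := by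
      intro e he
      induction e with
      | _ a b =>
        have hab : a ≠ b := by simpa using hF _ he
        by_cases hv : v ∈ (s(a,b) : Sym2 (Fin n))
        · rcases Sym2.mem_iff.1 hv with rfl | rfl
          · simp only [Sym2.map_pair_eq, Sym2.mk_isDiag_iff, hc', Function.update_self,
              Function.update_of_ne hab.symm, hv]
            simp [Bool.not_eq]
          · simp only [Sym2.map_pair_eq, Sym2.mk_isDiag_iff, hc', Function.update_self,
              Function.update_of_ne hab, hv]
            simp [Bool.not_eq, eq_comm]
        · have ha : a ≠ v := fun h => hv (h ▸ Sym2.mem_mk_left a b)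
          have hb : b ≠ v := fun h => hv (h ▸ Sym2.mem_mk_right a b)
          simp [Sym2.map_pair_eq, hc', Function.update_of_ne ha, Function.update_of_ne hb, hv]
    have hcut' : (F.filter (fun e => ¬ (e.map c').IsDiag)).card =
        (F.filter (fun e => v ∈ e ∧ (e.map c).IsDiag)).card +
        (F.filter (fun e => v ∉ e ∧ ¬ (e.map c).IsDiag)).card := by
      rw [Finset.filter_congr hflip, Finset.filter_or,
        Finset.card_union_of_disjoint]
      exact Finset.disjoint_left.2 (fun e h1 h2 =>
        (Finset.mem_filter.1 h2).2.1 (Finset.mem_filter.1 h1).2.1)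
    have hcut : (F.filter (fun e => ¬ (e.map c).IsDiag)).card =
        (F.filter (fun e => v ∈ e ∧ ¬ (e.map c).IsDiag)).card +
        (F.filter (fun e => v ∉ e ∧ ¬ (e.map c).IsDiag)).card := by
      have : ∀ e ∈ F, (¬ (e.map c).IsDiag ↔
          ((v ∈ e ∧ ¬ (e.map c).IsDiag) ∨ (v ∉ e ∧ ¬ (e.map c).IsDiag))) := by
        intro e he; by_cases hv : v ∈ e <;> tauto
      rw [Finset.filter_congr this, Finset.filter_or, Finset.card_union_of_disjoint]
      exact Finset.disjoint_left.2 (fun e h1 h2 =>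
        (Finset.mem_filter.1 h2).2.1 (Finset.mem_filter.1 h1).2.1)
    have := hc c' (Finset.mem_univ _)
    omega
  -- sum up
  have hsum1 := helper1 F hF
  have hsum2 := helper1 (F.filter (fun e => ¬ (e.map c).IsDiag))
    (fun e he => hF e (Finset.mem_filter.1 he).1)
  have hsplit : ∀ v : Fin n, (F.filter (fun e => v ∈ e)).card =
      (F.filter (fun e => v ∈ e ∧ (e.map c).IsDiag)).card +
      (F.filter (fun e => v ∈ e ∧ ¬ (e.map c).IsDiag)).card := by
    intro v
    rw [← Finset.filter_filter, ← Finset.filter_filter,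
      Finset.card_filter_add_card_filter_not]
  have hswap : ∀ v : Fin n,
      ((F.filter (fun e => ¬ (e.map c).IsDiag)).filter (fun e => v ∈ e)) =
      F.filter (fun e => v ∈ e ∧ ¬ (e.map c).IsDiag) := by
    intro v; rw [Finset.filter_filter]
    exact Finset.filter_congr (fun e he => by tauto)
  have h2 : ∑ v : Fin n, (F.filter (fun e => v ∈ e)).card ≤
      2 * ∑ v : Fin n, (F.filter (fun e => v ∈ e ∧ ¬ (e.map c).IsDiag)).card := by
    rw [Finset.mul_sum]
    refine Finset.sum_le_sum (fun v _ => ?_)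
    rw [hsplit v]; have := key v; omega
  rw [hsum1] at h2
  have h3 : ∑ v : Fin n, (F.filter (fun e => v ∈ e ∧ ¬ (e.map c).IsDiag)).card =
      2 * (F.filter (fun e => ¬ (e.map c).IsDiag)).card := by
    rw [← hsum2]; exact Finset.sum_congr rfl (fun v _ => by rw [hswap v])
  omega

/-- **Proposition (extremal construction for colourings).** For each `t ≥ 3` and all large
enough `n`, there is a two-colouring of `K_n` with no unavoidable `t`-colouring in which
each colour appears on at least `(ex(n, K_{t,t}) - 1)/2` edges. -/
theorem statement2 :
    ∀ t : ℕ, 3 ≤ t →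
      ∃ N : ℕ, ∀ n : ℕ, N ≤ n →
        ∃ R : SimpleGraph (Fin n),
          ¬ ContainsUnavoidable R t ∧
          ((turanNumber n (completeBipartiteGraph (Fin t) (Fin t)) : ℝ) - 1) / 2 ≤
            (R.edgeSet.ncard : ℝ) ∧
          ((turanNumber n (completeBipartiteGraph (Fin t) (Fin t)) : ℝ) - 1) / 2 ≤
            (Rᶜ.edgeSet.ncard : ℝ) := by
  intro t ht
  refine ⟨0, fun n _ => ?_⟩
  classical
  set H := completeBipartiteGraph (Fin t) (Fin t) with hH
  -- every graph has at most (n choose 2) edges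
  have hb : ∀ G : SimpleGraph (Fin n), G.edgeSet.ncard ≤ n.choose 2 := by
    intro G
    have h1 : G.edgeSet.ncard ≤ (⊤ : SimpleGraph (Fin n)).edgeSet.ncard :=
      Set.ncard_le_ncard (SimpleGraph.edgeSet_mono le_top) (Set.toFinite _)
    have h2 : (⊤ : SimpleGraph (Fin n)).edgeSet.ncard
        = #(⊤ : SimpleGraph (Fin n)).edgeFinset := Set.ncard_eq_toFinset_card' _
    rw [h2, SimpleGraph.card_edgeFinset_top_eq_card_choose_two, Fintype.card_fin] at h1
    exact h1
  -- the Turán number is attained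
  have h0 : (0 : ℕ) ∈ {m | ∃ G : SimpleGraph (Fin n), ¬ ContainsCopy G H ∧ G.edgeSet.ncard = m} := by
    refine ⟨⊥, ?_, by simp⟩
    rintro ⟨f, hinj, hadj⟩
    have h3 : H.Adj (Sum.inl ⟨0, by omega⟩) (Sum.inr ⟨0, by omega⟩) := by simp [hH]
    simpa using hadj _ _ h3
  have hmem : turanNumber n H ∈
      {m | ∃ G : SimpleGraph (Fin n), ¬ ContainsCopy G H ∧ G.edgeSet.ncard = m} := by
    apply Nat.sSup_mem ⟨0, h0⟩
    exact ⟨n.choose 2, fun m hm => by obtain ⟨G, -, hG⟩ := hm; exact hG ▸ hb G⟩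
  obtain ⟨Gex, hfree, hcard⟩ := hmem
  set m := turanNumber n H with hm
  -- max cut of the extremal graph
  have hFnd : ∀ e ∈ Gex.edgeFinset, ¬ e.IsDiag := fun e he =>
    SimpleGraph.not_isDiag_of_mem_edgeSet _ (SimpleGraph.mem_edgeFinset.1 he)
  obtain ⟨c, hc⟩ := maxcut Gex.edgeFinset hFnd
  have hGex_card : #Gex.edgeFinset = m := by
    rw [← hcard]; exact (Set.ncard_eq_toFinset_card' _).symm
  set k := m / 2 with hk
  have hkle : k ≤ #(Gex.edgeFinset.filter (fun e => ¬ (e.map c).IsDiag)) := by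
    rw [hGex_card] at hc; omega
  obtain ⟨E', hE'sub, hE'card⟩ := Finset.exists_subset_card_eq hkle
  set R : SimpleGraph (Fin n) := SimpleGraph.fromEdgeSet ↑E' with hR
  have hE'mem : ∀ e ∈ E', e ∈ Gex.edgeFinset ∧ ¬ (e.map c).IsDiag := by
    intro e he; exact Finset.mem_filter.1 (hE'sub he)
  have hRadj : ∀ a b : Fin n, R.Adj a b → s(a, b) ∈ E' := by
    intro a b hab
    exact ((SimpleGraph.fromEdgeSet_adj _).1 hab).1
  have hRle : ∀ a b : Fin n, R.Adj a b → Gex.Adj a b := by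
    intro a b hab
    exact Gex.mem_edgeSet.1 (SimpleGraph.mem_edgeFinset.1 (hE'mem _ (hRadj a b hab)).1)
  have hRcol : ∀ a b : Fin n, R.Adj a b → c a ≠ c b := by
    intro a b hab h
    exact (hE'mem _ (hRadj a b hab)).2 (by rw [Sym2.map_pair_eq, Sym2.mk_isDiag_iff]; exact h)
  have hRfree : ¬ ContainsCopy R H := by
    rintro ⟨f, hinj, hadj⟩
    exact hfree ⟨f, hinj, fun a b hab => hRle _ _ (hadj a b hab)⟩
  -- R has no clique of size ≥ 3
  have hclique : ∀ S : Finset (Fin n), R.IsClique ↑S → #S < 3 := by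
    intro S hS
    by_contra hcon
    obtain ⟨x, y, z, hx, hy, hz, hxy, hxz, hyz⟩ :=
      (Finset.two_lt_card_iff (s := S)).1 (by omega)
    have h1 := hRcol x y (hS (Finset.mem_coe.2 hx) (Finset.mem_coe.2 hy) hxy)
    have h2 := hRcol x z (hS (Finset.mem_coe.2 hx) (Finset.mem_coe.2 hz) hxz)
    have h3 := hRcol y z (hS (Finset.mem_coe.2 hy) (Finset.mem_coe.2 hz) hyz)
    cases hcx : c x <;> cases hcy : c y <;> cases hcz : c z <;> simp_all
  refine ⟨R, ?_, ?_, ?_⟩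
  · -- no unavoidable pattern
    rintro ⟨X, Y, hd, hXc, hYc, G, hG12, hcX, hcY, hcross⟩
    rcases hG12 with rfl | rfl
    · have := hclique X hcX; omega
    · simp only [compl_compl] at hcross
      have e1 : Fin t ≃ {x // x ∈ X} := (Finset.equivFinOfCardEq hXc).symm
      have e2 : Fin t ≃ {x // x ∈ Y} := (Finset.equivFinOfCardEq hYc).symm
      refine hRfree ⟨Sum.elim (fun i => (e1 i : Fin n)) (fun j => (e2 j : Fin n)), ?_, ?_⟩
      · rintro (i | i) (j | j) hij
        · simp only [Sum.elim_inl] at hij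
          exact congrArg Sum.inl (e1.injective (Subtype.ext hij))
        · simp only [Sum.elim_inl, Sum.elim_inr] at hij
          exact (Finset.disjoint_left.1 hd (hij ▸ (e1 i).2) (e2 j).2).elim
        · simp only [Sum.elim_inl, Sum.elim_inr] at hij
          exact (Finset.disjoint_left.1 hd (hij.symm ▸ (e1 j).2) (e2 i).2).elim
        · simp only [Sum.elim_inr] at hij
          exact congrArg Sum.inr (e2.injective (Subtype.ext hij))
      · rintro (i | i) (j | j) hij
        · simp [hH] at hij
        · exact hcross _ (e1 i).2 _ (e2 j).2
        · exact (hcross _ (e1 j).2 _ (e2 i).2).symm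
        · simp [hH] at hij
  all_goals {
    have hRk : R.edgeSet.ncard = k := by
      have hdiag : (↑E' : Set (Sym2 (Fin n))) \ {e | e.IsDiag} = ↑E' := by
        ext e
        simp only [Set.mem_diff, Set.mem_setOf_eq, Finset.mem_coe]
        exact ⟨fun h => h.1, fun h => ⟨h, fun hd' => hFnd e (hE'mem e h).1 hd'⟩⟩
      rw [hR, SimpleGraph.edgeSet_fromEdgeSet, Sym2.diagSet_eq_setOfPred_isDiag, hdiag, Set.ncard_coe_finset, hE'card]
    have hsum : R.edgeSet.ncard + Rᶜ.edgeSet.ncard = n.choose 2 := by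
      have hdis : Disjoint R.edgeSet Rᶜ.edgeSet :=
        (SimpleGraph.disjoint_edgeSet).2 disjoint_compl_right
      have hun : R.edgeSet ∪ Rᶜ.edgeSet = (⊤ : SimpleGraph (Fin n)).edgeSet := by
        rw [← SimpleGraph.edgeSet_sup, sup_compl_eq_top]
      have := Set.ncard_union_eq hdis (Set.toFinite _) (Set.toFinite _)
      rw [hun] at this
      have h2 : (⊤ : SimpleGraph (Fin n)).edgeSet.ncard
          = #(⊤ : SimpleGraph (Fin n)).edgeFinset := Set.ncard_eq_toFinset_card' _
      rw [← this, h2,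
        SimpleGraph.card_edgeFinset_top_eq_card_choose_two, Fintype.card_fin]
    have hmq : m ≤ n.choose 2 := hcard ▸ hb Gex
    have h2k : 2 * k ≤ m := by omega
    have hk1 : m ≤ 2 * k + 1 := by omega
    first
    | · rw [hRk]
        rw [div_le_iff₀ (by norm_num : (0:ℝ) < 2)]
        have : (m : ℝ) ≤ 2 * k + 1 := by exact_mod_cast hk1
        linarith
    | · have hr : m ≤ 2 * Rᶜ.edgeSet.ncard := by omega
        rw [div_le_iff₀ (by norm_num : (0:ℝ) < 2)]
        have : (m : ℝ) ≤ 2 * Rᶜ.edgeSet.ncard := by exact_mod_cast hr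
        linarith }
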